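/- Let α be a positive integer, β an integer with gcd(α,β) = 1, and γ an integer. Define D(γ) = ∑_{r=1}^{α} ( {(γ + rβ)/α} − {(γ − rβ)/α} ) · ((r/α)). Then D(γ) = D(α − 1 − γ). (This is the combinatorial identity expressing that the eta invariant satisfies the Serre-duality symmetry η_L(0) = η_{K−L}(0).) -/
import Mathlib


/-- The sawtooth function `((x))`: equal to `{x} - 1/2` for `x ∉ ℤ` and to `0` for `x ∈ ℤ`. -/
noncomputable def sawtooth (x : ℝ) : ℝ :=
  if Int.fract x = 0 then 0 else Int.fract x - 1 / 2

lemma neg_one_sub_emod (x : ℤ) (α : ℕ) (hα : 0 < α) :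
    (-1 - x) % (α : ℤ) = (α : ℤ) - 1 - x % α := by
  have h0 : (0 : ℤ) ≤ x % α := Int.emod_nonneg x (by exact_mod_cast hα.ne')
  have h1 : x % α < α := Int.emod_lt_of_pos x (by exact_mod_cast hα)
  have hx : -1 - x = ((α : ℤ) - 1 - x % α) + α * (-(x / α) - 1) := by
    have := Int.emod_add_mul_ediv x α
    ring_nf
    ring_nf at this
    linarith
  rw [hx, Int.add_mul_emod_self_left, Int.emod_eq_of_lt (by omega) (by omega)]

/-- Serre-duality symmetry of the eta invariant: with
`D(γ) = ∑_{r=1}^{α} ({(γ+rβ)/α} - {(γ-rβ)/α}) ((r/α))` one has `D(γ) = D(α - 1 - γ)`. -/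
theorem serre_duality_symmetry
    (α : ℕ) (hα : 0 < α) (β : ℤ) (hcop : Int.gcd (α : ℤ) β = 1) (γ : ℤ)
    (D : ℤ → ℝ)
    (hD : ∀ c : ℤ, D c = ∑ r ∈ Finset.Icc 1 α,
      (Int.fract (((c : ℝ) + (r : ℝ) * (β : ℝ)) / (α : ℝ)) -
        Int.fract (((c : ℝ) - (r : ℝ) * (β : ℝ)) / (α : ℝ))) * sawtooth ((r : ℝ) / (α : ℝ))) :
    D γ = D ((α : ℤ) - 1 - γ) := by
  rw [hD, hD]
  refine Finset.sum_congr rfl fun r _ => ?_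
  congr 1
  have key : ∀ m : ℤ, Int.fract ((m : ℝ) / (α : ℝ)) = ((m % (α : ℤ) : ℤ) : ℝ) / (α : ℝ) :=
    fun m => Int.fract_div_intCast_eq_div_intCast_mod
  have e1 : ((((α : ℤ) - 1 - γ : ℤ) : ℝ) + (r : ℝ) * (β : ℝ)) / (α : ℝ)
      = (((-1 - (γ - r * β) : ℤ) : ℝ) + (α : ℝ)) / (α : ℝ) := by push_cast; ring
  have e2 : ((((α : ℤ) - 1 - γ : ℤ) : ℝ) - (r : ℝ) * (β : ℝ)) / (α : ℝ)
      = (((-1 - (γ + r * β) : ℤ) : ℝ) + (α : ℝ)) / (α : ℝ) := by push_cast; ring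
  have e3 : (((γ : ℤ) : ℝ) + (r : ℝ) * (β : ℝ)) / (α : ℝ)
      = (((γ + r * β : ℤ) : ℝ)) / (α : ℝ) := by push_cast; ring
  have e4 : (((γ : ℤ) : ℝ) - (r : ℝ) * (β : ℝ)) / (α : ℝ)
      = (((γ - r * β : ℤ) : ℝ)) / (α : ℝ) := by push_cast; ring
  have hα' : (α : ℝ) ≠ 0 := by positivity
  have frac_shift : ∀ m : ℤ, Int.fract ((((m : ℤ) : ℝ) + (α : ℝ)) / (α : ℝ))
      = Int.fract (((m : ℤ) : ℝ) / (α : ℝ)) := by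
    intro m
    rw [add_div, div_self hα', Int.fract_add_intCast ((m : ℝ) / (α : ℝ)) 1 |>.symm]
    norm_num
  rw [e1, e2, e3, e4, frac_shift, frac_shift, key, key, key, key,
    neg_one_sub_emod (γ - r * β) α hα, neg_one_sub_emod (γ + r * β) α hα]
  push_cast
  ring
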